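/- The relation T1 ~ T2 defined by ν_{T1} = ν_{T2} is a lattice congruence on esTam_n, and the map T ↦ ν_T induces a lattice isomorphism from the quotient lattice esTam_n/~ onto the product lattice [3]^{n−1}, where [3] is the three-element chain ↑ < • < ←. -/
import Mathlib


open scoped Classical

namespace EsTam

/-- A cell `(i, j)`: `i` is the row index, `j` the column index. -/
abbrev Cell := ℕ × ℕ

/-- Membership in the staircase shape of size `n`: rows `1` and `2` consist of the
cells `(i, j)` with `1 ≤ j ≤ n`, and row `i` for `3 ≤ i ≤ n` consists of the cells
`(i, j)` with `i - 1 ≤ j ≤ n`. -/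
def IsCell (n : ℕ) (c : Cell) : Prop :=
  1 ≤ c.1 ∧ c.1 ≤ n ∧ 1 ≤ c.2 ∧ c.2 ≤ n ∧ (c.1 ≤ 2 ∨ c.1 - 1 ≤ c.2)

/-- The root cell `(1, n)`. -/
def root (n : ℕ) : Cell := (1, n)

/-- The border cells `(i, i - 1)` for `2 ≤ i ≤ n`. -/
def IsBorder (n : ℕ) (c : Cell) : Prop :=
  2 ≤ c.1 ∧ c.1 ≤ n ∧ c.2 = c.1 - 1

/-- An fb-tableau of size `n`: a set of cells of the staircase shape containing
the root and all border cells, and such that every cell other than the root has a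
cell of the tableau strictly to its left in its row (same `i`, larger `j`) or
strictly above it in its column (same `j`, smaller `i`). -/
structure FB (n : ℕ) where
  cells : Set Cell
  isCell_of_mem : ∀ c ∈ cells, IsCell n c
  root_mem : root n ∈ cells
  border_mem : ∀ c : Cell, IsBorder n c → c ∈ cells
  supported : ∀ c ∈ cells, c ≠ root n →
    (∃ j', c.2 < j' ∧ ((c.1, j') : Cell) ∈ cells) ∨
    (∃ i', i' < c.1 ∧ ((i', c.2) : Cell) ∈ cells)

variable {n : ℕ}

/-- `c` is a left-arrow of `T`: a cell of `T`, other than the root, with no cell of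
`T` strictly to its left in its row. -/
def IsLeftArrow (T : FB n) (c : Cell) : Prop :=
  c ∈ T.cells ∧ c ≠ root n ∧ ∀ j', c.2 < j' → ((c.1, j') : Cell) ∉ T.cells

/-- `c` is an up-arrow of `T`: a cell of `T`, other than the root, with no cell of
`T` strictly above it in its column. -/
def IsUpArrow (T : FB n) (c : Cell) : Prop :=
  c ∈ T.cells ∧ c ≠ root n ∧ ∀ i', i' < c.1 → ((i', c.2) : Cell) ∉ T.cells

/-- The row space of `T`: cells lying, in their row, weakly to the right of the
root or of a left-arrow of `T`. -/
def RowSp (T : FB n) : Set Cell :=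
  {c | IsCell n c ∧ ∃ j', c.2 ≤ j' ∧
    (((c.1, j') : Cell) = root n ∨ IsLeftArrow T (c.1, j'))}

/-- The column space of `T`: cells lying, in their column, weakly below the root or
an up-arrow of `T`. -/
def ColSp (T : FB n) : Set Cell :=
  {c | IsCell n c ∧ ∃ i', i' ≤ c.1 ∧
    (((i', c.2) : Cell) = root n ∨ IsUpArrow T (i', c.2))}

/-- `c` is a free cell of `T`: it lies strictly below the up-arrow of `T` in its
column and strictly to the right of the left-arrow of `T` in its row. -/
def IsFree (T : FB n) (c : Cell) : Prop :=
  IsCell n c ∧ (∃ i', i' < c.1 ∧ IsUpArrow T (i', c.2)) ∧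
    (∃ j', c.2 < j' ∧ IsLeftArrow T (c.1, j'))

/-- The relation `S ⊲ T` on fb-tableaux of size `n`. -/
def Lhd (S T : FB n) : Prop :=
  ColSp S ⊆ ColSp T ∧ RowSp T ⊆ RowSp S ∧
    ∀ c : Cell, IsFree S c → IsFree T c → c ∈ S.cells → c ∈ T.cells

/-- `T` covers `S` in `esTam n`. -/
def CovRel (S T : FB n) : Prop :=
  Lhd S T ∧ S ≠ T ∧ ∀ U : FB n, Lhd S U → Lhd U T → U = S ∨ U = T

/-- `m` is the greatest lower bound of `x` and `y` in `esTam n`. -/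
def IsMeet (x y m : FB n) : Prop :=
  Lhd m x ∧ Lhd m y ∧ ∀ t : FB n, Lhd t x → Lhd t y → Lhd t m

/-- `j` is the least upper bound of `x` and `y` in `esTam n`. -/
def IsJoin (x y j : FB n) : Prop :=
  Lhd x j ∧ Lhd y j ∧ ∀ t : FB n, Lhd x t → Lhd y t → Lhd j t

/-- `T` is join-irreducible: it covers exactly one element. -/
def JoinIrr (T : FB n) : Prop := ∃! S : FB n, CovRel S T

/-- `T` is meet-irreducible: it is covered by exactly one element. -/
def MeetIrr (T : FB n) : Prop := ∃! S : FB n, CovRel T S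

/-- A strict chain `f 0 ⊲ f 1 ⊲ ⋯ ⊲ f m` of length `m`. -/
def IsStrictChain {m : ℕ} (f : Fin (m + 1) → FB n) : Prop :=
  ∀ i j : Fin (m + 1), i < j → Lhd (f i) (f j) ∧ f i ≠ f j

/-- `T` is small: every cell of `T` other than the root is an arrow. -/
def IsSmall (T : FB n) : Prop :=
  ∀ c ∈ T.cells, c ≠ root n → IsLeftArrow T c ∨ IsUpArrow T c

/-- `T` is binary: `T` has no free cells. -/
def IsBinary (T : FB n) : Prop := ∀ c : Cell, ¬ IsFree T c

/-- `c` lies strictly above the up-arrow of `T` in its column. -/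
def PointedUp (T : FB n) (c : Cell) : Prop :=
  ∃ i', c.1 < i' ∧ IsUpArrow T (i', c.2)

/-- `c` is pointed by a left-arrow of `T`: it lies strictly to the left of the
left-arrow of `T` in its row. -/
def PointedLeft (T : FB n) (c : Cell) : Prop :=
  ∃ j', j' < c.2 ∧ IsLeftArrow T (c.1, j')

end EsTam

namespace EsTam

/-- The `k`-th letter of the border word of `T` (for `1 ≤ k ≤ n - 1`), an element
of the three-element chain `↑ < • < ←` encoded as `Fin 3` with `↑ = 0`, `• = 1`
and `← = 2`: it records the content of the border cell `(k + 1, k)`. -/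
noncomputable def nuLetter {n : ℕ} (T : FB n) (k : ℕ) : Fin 3 :=
  if IsUpArrow T (k + 1, k) then 0 else if IsLeftArrow T (k + 1, k) then 2 else 1

/-- The border word `ν_T` of `T`, as an element of the product `[3]^(n-1)`. -/
noncomputable def nuMap {n : ℕ} (T : FB n) : Fin (n - 1) → Fin 3 :=
  fun k => nuLetter T (k.1 + 1)


section Aux

variable {n : ℕ}

lemma mem_ne_root_row {T : FB n} {p q : ℕ} (h : (p, q) ∈ T.cells) (hp : 2 ≤ p) :
    ((p, q) : Cell) ≠ root n := by
  intro he
  rw [root] at he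
  have : p = 1 := congrArg Prod.fst he
  omega

lemma mem_ne_root_col {T : FB n} {p q : ℕ} (h : (p, q) ∈ T.cells) (hq : q + 1 ≤ n) :
    ((p, q) : Cell) ≠ root n := by
  intro he
  rw [root] at he
  have : q = n := congrArg Prod.snd he
  omega

lemma border_mem' (T : FB n) {k : ℕ} (hk : 1 ≤ k) (hk' : k + 1 ≤ n) :
    ((k + 1, k) : Cell) ∈ T.cells :=
  T.border_mem _ ⟨by omega, by omega, by omega⟩

/-- In each column `q ≤ n-1` there is a lowest cell of `T`, which is an up-arrow. -/
lemma exists_upArrow (T : FB n) {q : ℕ} (hq : 1 ≤ q) (hq' : q + 1 ≤ n) :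
    ∃ i, 1 ≤ i ∧ i ≤ q + 1 ∧ IsUpArrow T (i, q) ∧ ∀ p, ((p, q) : Cell) ∈ T.cells → i ≤ p := by
  have hex : ∃ p, ((p, q) : Cell) ∈ T.cells := ⟨q + 1, border_mem' T hq hq'⟩
  set i := Nat.find hex with hi
  have hspec : ((i, q) : Cell) ∈ T.cells := Nat.find_spec hex
  have hmin : ∀ p, ((p, q) : Cell) ∈ T.cells → i ≤ p := fun p hp => Nat.find_min' hex hp
  have hcell := T.isCell_of_mem _ hspec
  refine ⟨i, hcell.1, hmin _ (border_mem' T hq hq'), ⟨hspec, mem_ne_root_col hspec hq', ?_⟩, hmin⟩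
  intro i' hi' hmem
  exact absurd (hmin i' hmem) (by omega)

/-- In each row `2 ≤ p ≤ n` there is a leftmost cell of `T`, which is a left-arrow. -/
lemma exists_leftArrow (T : FB n) {p : ℕ} (hp : 2 ≤ p) (hp' : p ≤ n) :
    ∃ j, p - 1 ≤ j ∧ j ≤ n ∧ IsLeftArrow T (p, j) ∧ ∀ q, ((p, q) : Cell) ∈ T.cells → q ≤ j := by
  classical
  have hb : ((p, p - 1) : Cell) ∈ T.cells := T.border_mem _ ⟨hp, hp', rfl⟩
  set Q : ℕ → Prop := fun j => ((p, j) : Cell) ∈ T.cells with hQ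
  set M := Nat.findGreatest Q n with hM
  have hQb : Q (p - 1) := hb
  have h1 : p - 1 ≤ M := Nat.le_findGreatest (by omega) hQb
  have hQM : Q M := Nat.findGreatest_spec (m := p - 1) (by omega) hQb
  have hMn : M ≤ n := Nat.findGreatest_le n
  have hmax : ∀ q, ((p, q) : Cell) ∈ T.cells → q ≤ M := by
    intro q hq
    by_contra hlt
    push_neg at hlt
    have hqn : q ≤ n := (T.isCell_of_mem _ hq).2.2.2.1
    exact Nat.findGreatest_is_greatest hlt hqn hq
  refine ⟨M, h1, hMn, ⟨hQM, mem_ne_root_row hQM hp, ?_⟩, hmax⟩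
  intro j' hj' hmem
  exact absurd (hmax j' hmem) (by omega)

lemma not_both_arrows (T : FB n) {c : Cell} (hl : IsLeftArrow T c) (hu : IsUpArrow T c) :
    False := by
  rcases T.supported c hl.1 hl.2.1 with ⟨j', hj', hm⟩ | ⟨i', hi', hm⟩
  · exact hl.2.2 j' hj' hm
  · exact hu.2.2 i' hi' hm

lemma nuLetter_eq_zero_iff (T : FB n) (k : ℕ) :
    nuLetter T k = 0 ↔ IsUpArrow T (k + 1, k) := by
  unfold nuLetter
  split_ifs with h1 h2 <;> simp [h1, *]

lemma nuLetter_eq_two_iff (T : FB n) (k : ℕ) :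
    nuLetter T k = 2 ↔ IsLeftArrow T (k + 1, k) := by
  unfold nuLetter
  split_ifs with h1 h2
  · simp only [show (0 : Fin 3) ≠ 2 by decide, false_iff]
    intro hl; exact not_both_arrows T hl h1
  · simp [h2]
  · simp [h2]

lemma fin3_le {a b : Fin 3} (h0 : b = 0 → a = 0) (h2 : a = 2 → b = 2) : a ≤ b := by
  revert h0 h2; fin_cases a <;> fin_cases b <;> decide

lemma fin3_le_zero {a : Fin 3} (h : a ≤ 0) : a = 0 := le_antisymm h (by omega)

lemma fin3_two_le {a : Fin 3} (h : 2 ≤ a) : a = 2 := le_antisymm (by omega) h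

lemma fin3_one_le_ne {a : Fin 3} (h : a ≠ 0) : 1 ≤ a := by
  fin_cases a <;> simp_all <;> decide

/-- Monotonicity of the border letters along `⊲`. -/
lemma lhd_nuLetter_mono {S T : FB n} (h : Lhd S T) {k : ℕ}
    (hk : 1 ≤ k) (hk' : k + 1 ≤ n) : nuLetter S k ≤ nuLetter T k := by
  apply fin3_le
  · -- if the border is an up-arrow of T, it is one of S
    intro h0
    rw [nuLetter_eq_zero_iff] at h0 ⊢
    by_contra hnot
    have hmemS : ((k + 1, k) : Cell) ∈ S.cells := border_mem' S hk hk'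
    have hne : ((k + 1, k) : Cell) ≠ root n := mem_ne_root_col hmemS hk'
    have : ∃ i', i' < k + 1 ∧ ((i', k) : Cell) ∈ S.cells := by
      by_contra hh
      push_neg at hh
      exact hnot ⟨hmemS, hne, hh⟩
    obtain ⟨i', hi', hmem⟩ := this
    obtain ⟨i, hi1, hiq, hiu, hmin⟩ := exists_upArrow S hk hk'
    have hik : i < k + 1 := lt_of_le_of_lt (hmin i' hmem) hi'
    have hcol : ((i, k) : Cell) ∈ ColSp S :=
      ⟨S.isCell_of_mem _ hiu.1, i, le_refl i, Or.inr hiu⟩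
    have hcolT := h.1 hcol
    obtain ⟨_, i'', hi'', hroot | hup⟩ := hcolT
    · have : k = n := congrArg Prod.snd hroot
      omega
    · exact h0.2.2 i'' (lt_of_le_of_lt hi'' hik) hup.1
  · -- if the border is a left-arrow of S, it is one of T
    intro h2
    rw [nuLetter_eq_two_iff] at h2 ⊢
    by_contra hnot
    have hmemT : ((k + 1, k) : Cell) ∈ T.cells := border_mem' T hk hk'
    have hne : ((k + 1, k) : Cell) ≠ root n := mem_ne_root_col hmemT hk'
    have : ∃ j', k < j' ∧ ((k + 1, j') : Cell) ∈ T.cells := by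
      by_contra hh
      push_neg at hh
      exact hnot ⟨hmemT, hne, hh⟩
    obtain ⟨j', hj', hmem⟩ := this
    obtain ⟨M, hM1, hMn, hMl, hmax⟩ := exists_leftArrow T (p := k + 1) (by omega) (by omega)
    have hMk : k < M := lt_of_lt_of_le hj' (hmax j' hmem)
    have hrow : ((k + 1, M) : Cell) ∈ RowSp T :=
      ⟨T.isCell_of_mem _ hMl.1, M, le_refl M, Or.inr hMl⟩
    have hrowS := h.2.1 hrow
    obtain ⟨_, j'', hj'', hroot | hleft⟩ := hrowS
    · have : k + 1 = 1 := congrArg Prod.fst hroot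
      omega
    · exact h2.2.2 j'' (lt_of_lt_of_le hMk hj'') hleft.1

end Aux


section Bottom

variable {n : ℕ} {w : ℕ → Fin 3}

/-- Row `i` is allowed by the word `w` (it may contain non-border cells). -/
def RowOK (w : ℕ → Fin 3) (i : ℕ) : Prop := i = 1 ∨ w (i - 1) ≠ 2

/-- The lowest allowed row weakly above row `k`. -/
noncomputable def rr (w : ℕ → Fin 3) (k : ℕ) : ℕ := Nat.findGreatest (RowOK w) k

lemma rr_le (w : ℕ → Fin 3) (k : ℕ) : rr w k ≤ k := Nat.findGreatest_le k

lemma rr_pos (w : ℕ → Fin 3) {k : ℕ} (hk : 1 ≤ k) : 1 ≤ rr w k :=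
  Nat.le_findGreatest hk (Or.inl rfl)

lemma rr_ok (w : ℕ → Fin 3) {k : ℕ} (hk : 1 ≤ k) : RowOK w (rr w k) :=
  Nat.findGreatest_spec (m := 1) hk (Or.inl rfl)

lemma rr_max (w : ℕ → Fin 3) {k i : ℕ} (h1 : rr w k < i) (h2 : i ≤ k) :
    2 ≤ i ∧ w (i - 1) = 2 := by
  have := Nat.findGreatest_is_greatest (P := RowOK w) h1 h2
  rw [RowOK] at this
  push_neg at this
  exact ⟨by omega, this.2⟩

/-- The cells of the bottom tableau `B w`. -/
def Bset (n : ℕ) (w : ℕ → Fin 3) : Set Cell :=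
  {c | c = root n ∨ IsBorder n c ∨
    (∃ i, 2 ≤ i ∧ i ≤ n ∧ w (i - 1) ≠ 2 ∧ c = (i, n)) ∨
    (∃ k, 1 ≤ k ∧ k + 1 ≤ n ∧ w k ≠ 0 ∧ c = (rr w k, k))}

/-- The bottom tableau `B w` associated with a word `w`. -/
noncomputable def Bfb (n : ℕ) (w : ℕ → Fin 3) (hn : 1 ≤ n) : FB n where
  cells := Bset n w
  isCell_of_mem := by
    rintro c (rfl | hb | ⟨i, hi2, hin, hw, rfl⟩ | ⟨k, hk1, hkn, hw, rfl⟩)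
    · rw [root]; exact ⟨le_refl 1, hn, hn, le_refl n, Or.inl (by omega)⟩
    · obtain ⟨h2, hnn, he⟩ := hb
      refine ⟨by omega, hnn, by omega, by omega, Or.inr (by omega)⟩
    · exact ⟨by omega, hin, hn, le_refl n, Or.inr (by omega)⟩
    · have h1 := rr_pos w hk1
      have h2 := rr_le w k
      exact ⟨h1, by omega, hk1, by omega, Or.inr (by omega)⟩
  root_mem := Or.inl rfl
  border_mem := fun c hc => Or.inr (Or.inl hc)
  supported := by
    rintro c (rfl | hb | ⟨i, hi2, hin, hw, rfl⟩ | ⟨k, hk1, hkn, hw, rfl⟩) hne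
    · exact absurd rfl hne
    · obtain ⟨h2, hnn, he⟩ := hb
      obtain ⟨i, j⟩ := c
      simp only at h2 hnn he
      subst he
      by_cases hw : w (i - 1) = 0
      · refine Or.inl ⟨n, by omega, ?_⟩
        refine Or.inr (Or.inr (Or.inl ⟨i, h2, hnn, by rw [hw]; decide, rfl⟩))
      · refine Or.inr ⟨rr w (i - 1), by have := rr_le w (i - 1); omega, ?_⟩
        exact Or.inr (Or.inr (Or.inr ⟨i - 1, by omega, by omega, hw, rfl⟩))
    · refine Or.inr ⟨1, by omega, Or.inl ?_⟩
      rw [root]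
    · rcases rr_ok w hk1 with h1 | h1
      · refine Or.inl ⟨n, by omega, Or.inl ?_⟩
        rw [root, h1]
      · have h2 := rr_pos w hk1
        have h3 := rr_le w k
        by_cases hr1 : rr w k = 1
        · exact Or.inl ⟨n, by omega, Or.inl (by rw [root, hr1])⟩
        · refine Or.inl ⟨n, by omega, Or.inr (Or.inr (Or.inl ⟨rr w k, by omega, by omega, h1, rfl⟩))⟩

lemma B_col {hn : 1 ≤ n} {p q : ℕ} (hq' : q + 1 ≤ n) (hp : p < q + 1)
    (h : ((p, q) : Cell) ∈ (Bfb n w hn).cells) : w q ≠ 0 ∧ p = rr w q := by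
  rcases h with he | hb | ⟨i, hi2, hin, hw, he⟩ | ⟨k, hk1, hkn, hw, he⟩
  · rw [root] at he
    have : q = n := congrArg Prod.snd he
    omega
  · obtain ⟨h2, hnn, he⟩ := hb
    simp only at h2 he
    omega
  · have : q = n := congrArg Prod.snd he
    omega
  · have h1 : p = rr w k := congrArg Prod.fst he
    have h2 : q = k := congrArg Prod.snd he
    subst h2
    exact ⟨hw, h1⟩

lemma B_row {hn : 1 ≤ n} {p j : ℕ} (hp2 : 2 ≤ p) (hj : p - 1 < j)
    (h : ((p, j) : Cell) ∈ (Bfb n w hn).cells) :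
    (w (p - 1) ≠ 2 ∧ j = n) ∨ (1 ≤ j ∧ j + 1 ≤ n ∧ w j ≠ 0 ∧ p = rr w j) := by
  rcases h with he | hb | ⟨i, hi2, hin, hw, he⟩ | ⟨k, hk1, hkn, hw, he⟩
  · rw [root] at he
    have : p = 1 := congrArg Prod.fst he
    omega
  · obtain ⟨h2, hnn, he⟩ := hb
    simp only at he
    omega
  · have h1 : p = i := congrArg Prod.fst he
    have h2 : j = n := congrArg Prod.snd he
    subst h1; subst h2
    exact Or.inl ⟨hw, rfl⟩
  · have h1 : p = rr w k := congrArg Prod.fst he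
    have h2 : j = k := congrArg Prod.snd he
    subst h2
    exact Or.inr ⟨hk1, hkn, hw, h1⟩

lemma B_mem_col {hn : 1 ≤ n} {q : ℕ} (hq : 1 ≤ q) (hq' : q + 1 ≤ n) (hw : w q ≠ 0) :
    ((rr w q, q) : Cell) ∈ (Bfb n w hn).cells :=
  Or.inr (Or.inr (Or.inr ⟨q, hq, hq', hw, rfl⟩))

lemma B_mem_n {hn : 1 ≤ n} {p : ℕ} (hp2 : 2 ≤ p) (hpn : p ≤ n) (hw : w (p - 1) ≠ 2) :
    ((p, n) : Cell) ∈ (Bfb n w hn).cells :=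
  Or.inr (Or.inr (Or.inl ⟨p, hp2, hpn, hw, rfl⟩))

lemma B_leftArrow_n {hn : 1 ≤ n} {p : ℕ} (hp2 : 2 ≤ p) (hpn : p ≤ n) (hw : w (p - 1) ≠ 2) :
    IsLeftArrow (Bfb n w hn) (p, n) := by
  have hm : ((p, n) : Cell) ∈ (Bfb n w hn).cells := B_mem_n (hn := hn) hp2 hpn hw
  refine ⟨hm, mem_ne_root_row hm hp2, ?_⟩
  intro j' hj' hmem
  have := (Bfb n w hn).isCell_of_mem _ hmem
  have : j' ≤ n := this.2.2.2.1
  omega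

lemma B_leftArrow_border {hn : 1 ≤ n} {p : ℕ} (hp2 : 2 ≤ p) (hpn : p ≤ n) (hw : w (p - 1) = 2) :
    IsLeftArrow (Bfb n w hn) (p, p - 1) := by
  have hb : ((p, p - 1) : Cell) ∈ (Bfb n w hn).cells :=
    (Bfb n w hn).border_mem _ ⟨hp2, hpn, rfl⟩
  refine ⟨hb, mem_ne_root_row hb hp2, ?_⟩
  intro j' hj' hmem
  rcases B_row hp2 hj' hmem with ⟨hw2, _⟩ | ⟨hj1, hjn, hw0, hpe⟩
  · exact hw2 hw
  · rcases rr_ok w hj1 with h1 | h1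
    · omega
    · rw [← hpe] at h1
      exact h1 hw

lemma B_upArrow_char {hn : 1 ≤ n} {p q : ℕ} (h : IsUpArrow (Bfb n w hn) (p, q)) :
    1 ≤ q ∧ q + 1 ≤ n ∧ ((w q = 0 ∧ p = q + 1) ∨ (w q ≠ 0 ∧ p = rr w q)) := by
  obtain ⟨hmem, hne, habove⟩ := h
  rcases hmem with he | hb | ⟨i, hi2, hin, hw, he⟩ | ⟨k, hk1, hkn, hw, he⟩
  · exact absurd he hne
  · obtain ⟨h2, hnn, he⟩ := hb
    simp only at h2 hnn he
    subst he
    refine ⟨by omega, by omega, ?_⟩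
    by_cases hw : w (p - 1) = 0
    · exact Or.inl ⟨hw, by omega⟩
    · exfalso
      have := rr_le w (p - 1)
      exact habove (rr w (p - 1)) (by omega) (B_mem_col (by omega) (by omega) hw)
  · exfalso
    have h1 : p = i := congrArg Prod.fst he
    have h2 : q = n := congrArg Prod.snd he
    refine habove 1 (by omega) ?_
    rw [h2]
    exact Or.inl rfl
  · have h1 : p = rr w k := congrArg Prod.fst he
    have h2 : q = k := congrArg Prod.snd he
    subst h2
    exact ⟨hk1, hkn, Or.inr ⟨hw, h1⟩⟩

lemma B_nuLetter (hn : 1 ≤ n) {k : ℕ} (hk : 1 ≤ k) (hk' : k + 1 ≤ n) :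
    nuLetter (Bfb n w hn) k = w k := by
  by_cases h0 : w k = 0
  · rw [h0, nuLetter_eq_zero_iff]
    have hbm : ((k + 1, k) : Cell) ∈ (Bfb n w hn).cells := border_mem' (Bfb n w hn) hk hk'
    refine ⟨hbm, mem_ne_root_col hbm hk', ?_⟩
    · intro i' hi' hmem
      exact (B_col hk' hi' hmem).1 h0
  · have hnup : ¬ IsUpArrow (Bfb n w hn) (k + 1, k) := by
      intro hup
      have := rr_le w k
      exact hup.2.2 (rr w k) (by omega) (B_mem_col hk hk' h0)
    by_cases h2 : w k = 2
    · have : IsLeftArrow (Bfb n w hn) (k + 1, k) := by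
        have := B_leftArrow_border (w := w) (hn := hn) (p := k + 1) (by omega) (by omega)
          (by simpa using h2)
        simpa using this
      rw [nuLetter, if_neg hnup, if_pos this, h2]
    · have h1 : w k = 1 := by omega
      have : ¬ IsLeftArrow (Bfb n w hn) (k + 1, k) := by
        intro hl
        refine hl.2.2 n (by omega) ?_
        exact B_mem_n (by omega) (by omega) (by simpa using h2)
      rw [nuLetter, if_neg hnup, if_neg this, h1]

/-- The bottom tableau lies below every tableau whose word dominates `w`. -/
lemma B_lhd (hn : 1 ≤ n) (T : FB n)
    (hw : ∀ k, 1 ≤ k → k + 1 ≤ n → w k ≤ nuLetter T k) : Lhd (Bfb n w hn) T := by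
  refine ⟨?_, ?_, ?_⟩
  · -- column spaces
    rintro ⟨a, b⟩ ⟨hcell, i', hi', hroot | hup⟩
    · exact ⟨hcell, i', hi', Or.inl hroot⟩
    · obtain ⟨hb1, hbn, hcase⟩ := B_upArrow_char hup
      obtain ⟨iT, hiT1, hiTb, hiTu, hiTmin⟩ := exists_upArrow T hb1 hbn
      refine ⟨hcell, iT, ?_, Or.inr hiTu⟩
      rcases hcase with ⟨hw0, rfl⟩ | ⟨hwne, rfl⟩
      · omega
      · -- show iT ≤ rr w b
        have hTb : iT ≤ b := by
          by_contra hcon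
          have hTup : iT = b + 1 := by omega
          have hz : nuLetter T b ≠ 0 := by
            intro hz
            have h1 := hw b hb1 hbn
            rw [hz] at h1
            exact hwne (fin3_le_zero h1)
          rw [Ne, nuLetter_eq_zero_iff] at hz
          rw [hTup] at hiTu
          exact hz hiTu
        have hrr : iT ≤ rr w b := by
          by_contra hcon
          push_neg at hcon
          obtain ⟨hiT2, hwt⟩ := rr_max w hcon hTb
          have h1 := hw (iT - 1) (by omega) (by omega)
          rw [hwt] at h1
          have h2 := fin3_two_le h1
          rw [nuLetter_eq_two_iff] at h2
          have hiTe : iT - 1 + 1 = iT := by omega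
          rw [hiTe] at h2
          exact h2.2.2 b (by omega) hiTu.1
        simp only at hi'
        omega
  · -- row spaces
    rintro ⟨a, b⟩ ⟨hcell, j', hj', hroot | hleft⟩
    · exact ⟨hcell, j', hj', Or.inl hroot⟩
    · have hmem := hleft.1
      have hcella := T.isCell_of_mem _ hmem
      have ha2 : 2 ≤ a := by
        by_contra hcon
        have ha0 : 1 ≤ a := hcell.1
        have ha1 : a = 1 := by omega
        subst ha1
        by_cases hjn : j' = n
        · exact hleft.2.1 (by rw [root, hjn])
        · refine hleft.2.2 n ?_ T.root_mem
          have hj'n : j' ≤ n := hcella.2.2.2.1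
          omega
      have han : a ≤ n := hcella.2.1
      simp only at hj'
      by_cases hw2 : w (a - 1) = 2
      · -- left-arrow of T in row a is at the border
        have h1 := hw (a - 1) (by omega) (by omega)
        rw [hw2] at h1
        have h2 := fin3_two_le h1
        rw [nuLetter_eq_two_iff] at h2
        have hae : a - 1 + 1 = a := by omega
        rw [hae] at h2
        have hj'eq : j' = a - 1 := by
          by_contra hne
          rcases Nat.lt_or_ge j' (a - 1) with h | h
          · exact hleft.2.2 (a - 1) (by omega) h2.1
          · exact h2.2.2 j' (by omega) hmem
        refine ⟨hcell, a - 1, by omega, Or.inr ?_⟩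
        exact B_leftArrow_border ha2 han hw2
      · refine ⟨hcell, n, ?_, Or.inr (B_leftArrow_n ha2 han hw2)⟩
        have hbn2 : b ≤ n := hcell.2.2.2.1
        omega
  · -- free cells
    rintro ⟨p, q⟩ hfreeB hfreeT hmem
    obtain ⟨hcell, ⟨i', hi', hup⟩, -⟩ := hfreeB
    obtain ⟨hb1, hbn, hcase⟩ := B_upArrow_char hup
    simp only at hi' hb1 hbn hcase
    -- show (p, q) is a border cell
    rcases hmem with he | hb | ⟨i, hi2, hin, hww, he⟩ | ⟨k, hk1, hkn, hww, he⟩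
    · exfalso
      rw [root] at he
      have hp1 : p = 1 := congrArg Prod.fst he
      have hi1 : 1 ≤ i' := ((Bfb n w hn).isCell_of_mem _ hup.1).1
      have hi'' : i' < p := hi'
      omega
    · exact T.border_mem _ hb
    · exfalso
      have : q = n := congrArg Prod.snd he
      omega
    · exfalso
      have h1 : p = rr w k := congrArg Prod.fst he
      have h2 : q = k := congrArg Prod.snd he
      subst h2
      rcases hcase with ⟨hw0, hie⟩ | ⟨hwne, hie⟩
      · exact hww hw0
      · rw [hie, h1] at hi'
        exact lt_irrefl _ hi'

end Bottom


section Top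

variable {n : ℕ} {w : ℕ → Fin 3}

/-- The leftmost allowed column weakly to the right of column `i` (at most `n`). -/
noncomputable def ccf (w : ℕ → Fin 3) (n i : ℕ) : ℕ :=
  Nat.find (p := fun j => (i ≤ j ∧ w j ≠ 0) ∨ j = n) ⟨n, Or.inr rfl⟩

lemma ccf_le (w : ℕ → Fin 3) (n i : ℕ) : ccf w n i ≤ n :=
  Nat.find_min' _ (Or.inr rfl)

lemma ccf_spec (w : ℕ → Fin 3) (n i : ℕ) :
    (i ≤ ccf w n i ∧ w (ccf w n i) ≠ 0) ∨ ccf w n i = n :=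
  Nat.find_spec (p := fun j => (i ≤ j ∧ w j ≠ 0) ∨ j = n) ⟨n, Or.inr rfl⟩

lemma ccf_ge {i : ℕ} (hin : i ≤ n) : i ≤ ccf w n i := by
  rcases ccf_spec w n i with ⟨h, _⟩ | h
  · exact h
  · omega

lemma ccf_min {i j : ℕ} (hij : i ≤ j) (hj : j < ccf w n i) : w j = 0 := by
  have h := Nat.find_min (p := fun j => (i ≤ j ∧ w j ≠ 0) ∨ j = n) ⟨n, Or.inr rfl⟩ hj
  by_contra hc
  exact h (Or.inl ⟨hij, hc⟩)

lemma ccf_ne {i j : ℕ} (hj : j < ccf w n i) : j ≠ n := by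
  have h := Nat.find_min (p := fun j => (i ≤ j ∧ w j ≠ 0) ∨ j = n) ⟨n, Or.inr rfl⟩ hj
  intro he
  exact h (Or.inr he)

/-- The cells of the top tableau `U w`. -/
def Uset (n : ℕ) (w : ℕ → Fin 3) : Set Cell :=
  {c | c = root n ∨ IsBorder n c ∨
    (∃ k, 1 ≤ k ∧ k + 1 ≤ n ∧ w k ≠ 0 ∧ c = (1, k)) ∨
    (∃ i, 2 ≤ i ∧ i ≤ n ∧ w (i - 1) ≠ 2 ∧ c = (i, ccf w n i))}

/-- The top tableau `U w` associated with a word `w`. -/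
noncomputable def Ufb (n : ℕ) (w : ℕ → Fin 3) (hn : 1 ≤ n) : FB n where
  cells := Uset n w
  isCell_of_mem := by
    rintro c (rfl | hb | ⟨k, hk1, hkn, hw, rfl⟩ | ⟨i, hi2, hin, hw, rfl⟩)
    · rw [root]; exact ⟨le_refl 1, hn, hn, le_refl n, Or.inl (by omega)⟩
    · obtain ⟨h2, hnn, he⟩ := hb
      exact ⟨by omega, hnn, by omega, by omega, Or.inr (by omega)⟩
    · exact ⟨le_refl 1, hn, hk1, by omega, Or.inl (by omega)⟩
    · have h1 := ccf_ge (w := w) hin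
      have h2 := ccf_le w n i
      exact ⟨by omega, hin, by omega, h2, Or.inr (by omega)⟩
  root_mem := Or.inl rfl
  border_mem := fun c hc => Or.inr (Or.inl hc)
  supported := by
    rintro c (rfl | hb | ⟨k, hk1, hkn, hw, rfl⟩ | ⟨i, hi2, hin, hw, rfl⟩) hne
    · exact absurd rfl hne
    · obtain ⟨h2, hnn, he⟩ := hb
      obtain ⟨i, j⟩ := c
      simp only at h2 hnn he
      subst he
      by_cases hw : w (i - 1) = 0
      · refine Or.inl ⟨ccf w n i, ?_, ?_⟩
        · have := ccf_ge (w := w) hnn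
          omega
        · exact Or.inr (Or.inr (Or.inr ⟨i, h2, hnn, by rw [hw]; decide, rfl⟩))
      · refine Or.inr ⟨1, by omega, ?_⟩
        exact Or.inr (Or.inr (Or.inl ⟨i - 1, by omega, by omega, hw, rfl⟩))
    · exact Or.inl ⟨n, by omega, Or.inl (by rw [root])⟩
    · rcases ccf_spec w n i with ⟨hge, hwne⟩ | hen
      · by_cases hcn : ccf w n i = n
        · refine Or.inr ⟨1, by omega, Or.inl ?_⟩
          rw [root, hcn]
        · refine Or.inr ⟨1, by omega, ?_⟩
          have h2 := ccf_le w n i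
          exact Or.inr (Or.inr (Or.inl ⟨ccf w n i, by omega, by omega, hwne, rfl⟩))
      · refine Or.inr ⟨1, by omega, Or.inl ?_⟩
        rw [root, hen]

lemma U_upArrow_char {hn : 1 ≤ n} {p q : ℕ} (h : IsUpArrow (Ufb n w hn) (p, q)) :
    1 ≤ q ∧ q + 1 ≤ n ∧ ((w q = 0 ∧ p = q + 1) ∨ (w q ≠ 0 ∧ p = 1)) := by
  obtain ⟨hmem, hne, habove⟩ := h
  rcases hmem with he | hb | ⟨k, hk1, hkn, hw, he⟩ | ⟨i, hi2, hin, hw, he⟩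
  · exact absurd he hne
  · obtain ⟨h2, hnn, he⟩ := hb
    simp only at h2 hnn he
    subst he
    refine ⟨by omega, by omega, ?_⟩
    by_cases hw : w (p - 1) = 0
    · exact Or.inl ⟨hw, by omega⟩
    · exfalso
      refine habove 1 (by omega) ?_
      exact Or.inr (Or.inr (Or.inl ⟨p - 1, by omega, by omega, hw, rfl⟩))
  · have h1 : p = 1 := congrArg Prod.fst he
    have h2 : q = k := congrArg Prod.snd he
    subst h2
    exact ⟨hk1, hkn, Or.inr ⟨hw, h1⟩⟩
  · exfalso
    have h1 : p = i := congrArg Prod.fst he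
    have h2 : q = ccf w n i := congrArg Prod.snd he
    rcases ccf_spec w n i with ⟨hge, hwne⟩ | hen
    · refine habove 1 (by omega) ?_
      have h3 := ccf_le w n i
      have h4 : ccf w n i ≠ n := by
        intro hcon
        refine habove 1 (by omega) ?_
        rw [h2, hcon]
        exact Or.inl rfl
      rw [h2]
      exact Or.inr (Or.inr (Or.inl ⟨ccf w n i, by omega, by omega, hwne, rfl⟩))
    · refine habove 1 (by omega) ?_
      rw [h2, hen]
      exact Or.inl rfl

lemma U_leftArrow_char {hn : 1 ≤ n} {p q : ℕ} (h : IsLeftArrow (Ufb n w hn) (p, q)) :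
    2 ≤ p ∧ p ≤ n ∧ ((w (p - 1) = 2 ∧ q = p - 1) ∨ (w (p - 1) ≠ 2 ∧ q = ccf w n p)) := by
  obtain ⟨hmem, hne, hleftof⟩ := h
  rcases hmem with he | hb | ⟨k, hk1, hkn, hw, he⟩ | ⟨i, hi2, hin, hw, he⟩
  · exact absurd he hne
  · obtain ⟨h2, hnn, he⟩ := hb
    simp only at h2 hnn he
    subst he
    refine ⟨h2, hnn, ?_⟩
    by_cases hw : w (p - 1) = 2
    · exact Or.inl ⟨hw, rfl⟩
    · exfalso
      have hge := ccf_ge (w := w) hnn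
      refine hleftof (ccf w n p) (by omega) ?_
      exact Or.inr (Or.inr (Or.inr ⟨p, h2, hnn, hw, rfl⟩))
  · exfalso
    have h1 : p = 1 := congrArg Prod.fst he
    have h2 : q = k := congrArg Prod.snd he
    refine hleftof n (by omega) ?_
    rw [h1]
    exact Or.inl (by rw [root])
  · have h1 : p = i := congrArg Prod.fst he
    have h2 : q = ccf w n i := congrArg Prod.snd he
    subst h1
    exact ⟨hi2, hin, Or.inr ⟨hw, h2⟩⟩

lemma U_upArrow_one {hn : 1 ≤ n} {q : ℕ} (hq : 1 ≤ q) (hq' : q + 1 ≤ n) (hw : w q ≠ 0) :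
    IsUpArrow (Ufb n w hn) (1, q) := by
  have hm : ((1, q) : Cell) ∈ (Ufb n w hn).cells := Or.inr (Or.inr (Or.inl ⟨q, hq, hq', hw, rfl⟩))
  refine ⟨hm, mem_ne_root_col hm hq', fun i' hi' hmem' => ?_⟩
  have h1 : 1 ≤ i' := ((Ufb n w hn).isCell_of_mem _ hmem').1
  have h2 : i' < 1 := hi'
  omega

lemma U_upArrow_border {hn : 1 ≤ n} {q : ℕ} (hq : 1 ≤ q) (hq' : q + 1 ≤ n) (hw : w q = 0) :
    IsUpArrow (Ufb n w hn) (q + 1, q) := by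
  have hm : ((q + 1, q) : Cell) ∈ (Ufb n w hn).cells := border_mem' _ hq hq'
  refine ⟨hm, mem_ne_root_col hm hq', ?_⟩
  rintro i' hi' (he | hb | ⟨k, hk1, hkn, hwk, he⟩ | ⟨i, hi2, hin, hwi, he⟩)
  · rw [root] at he
    have : q = n := congrArg Prod.snd he
    omega
  · obtain ⟨h2, hnn, he⟩ := hb
    simp only at h2 he
    omega
  · have h1 : q = k := congrArg Prod.snd he
    rw [← h1] at hwk
    exact hwk hw
  · have h1 : i' = i := congrArg Prod.fst he
    have h2 : q = ccf w n i := congrArg Prod.snd he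
    rcases ccf_spec w n i with ⟨hge, hwne⟩ | hen
    · rw [← h2] at hwne
      exact hwne hw
    · omega

lemma U_nuLetter (hn : 1 ≤ n) {k : ℕ} (hk : 1 ≤ k) (hk' : k + 1 ≤ n) :
    nuLetter (Ufb n w hn) k = w k := by
  by_cases h0 : w k = 0
  · rw [h0, nuLetter_eq_zero_iff]
    exact U_upArrow_border hk hk' h0
  · have hnup : ¬ IsUpArrow (Ufb n w hn) (k + 1, k) := by
      intro hup
      exact hup.2.2 1 (by omega) (U_upArrow_one hk hk' h0).1
    by_cases h2 : w k = 2
    · have hla : IsLeftArrow (Ufb n w hn) (k + 1, k) := by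
        have hm : ((k + 1, k) : Cell) ∈ (Ufb n w hn).cells := border_mem' _ hk hk'
        refine ⟨hm, mem_ne_root_col hm hk', ?_⟩
        rintro j' hj' (he | hb | ⟨k', hk1', hkn', hwk, he⟩ | ⟨i, hi2, hin, hwi, he⟩)
        · rw [root] at he
          have : k + 1 = 1 := congrArg Prod.fst he
          omega
        · obtain ⟨hb2, hbn, hbe⟩ := hb
          simp only at hbe
          omega
        · have h1 : k + 1 = 1 := congrArg Prod.fst he
          omega
        · have ha : k + 1 = i := congrArg Prod.fst he
          rw [← ha] at hwi
          simp only [Nat.add_sub_cancel] at hwi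
          exact hwi h2
      rw [nuLetter, if_neg hnup, if_pos hla, h2]
    · have h1 : w k = 1 := by
        have := (w k).isLt
        rcases Nat.lt_or_ge (w k).1 2 with h | h
        · have h1 : (w k).1 = 1 := by
            rcases Nat.eq_or_lt_of_le (Nat.zero_le (w k).1) with hz | hz
            · exact absurd (Fin.ext hz.symm) h0
            · omega
          exact Fin.ext h1
        · exact absurd (Fin.ext (by omega : (w k).1 = 2)) h2
      have hnl : ¬ IsLeftArrow (Ufb n w hn) (k + 1, k) := by
        intro hl
        have hge : k + 1 ≤ ccf w n (k + 1) := ccf_ge (by omega)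
        refine hl.2.2 (ccf w n (k + 1)) (by omega) ?_
        refine Or.inr (Or.inr (Or.inr ⟨k + 1, by omega, by omega, ?_, rfl⟩))
        simp only [Nat.add_sub_cancel]
        rw [h1]; decide
      rw [nuLetter, if_neg hnup, if_neg hnl, h1]

/-- The top tableau lies above every tableau whose word is dominated by `w`. -/
lemma U_lhd (hn : 1 ≤ n) (T : FB n)
    (hw : ∀ k, 1 ≤ k → k + 1 ≤ n → nuLetter T k ≤ w k) : Lhd T (Ufb n w hn) := by
  refine ⟨?_, ?_, ?_⟩
  · -- column spaces
    rintro ⟨a, b⟩ ⟨hcell, i', hi', hroot | hup⟩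
    · exact ⟨hcell, i', hi', Or.inl hroot⟩
    · have hmem := hup.1
      have hcelli := T.isCell_of_mem _ hmem
      have hb1 : 1 ≤ b := hcelli.2.2.1
      have hbn : b ≤ n := hcelli.2.2.2.1
      have hi'1 : 1 ≤ i' := hcelli.1
      have hbn' : b + 1 ≤ n := by
        rcases Nat.eq_or_lt_of_le hbn with he | hlt
        · exfalso
          rcases Nat.eq_or_lt_of_le hi'1 with h1 | h1
          · exact hup.2.1 (by rw [root, ← he, ← h1])
          · exact hup.2.2 1 (by omega) (by rw [he]; exact T.root_mem)
        · omega
      have hi'b : i' ≤ b + 1 := by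
        by_contra hcon
        push_neg at hcon
        exact hup.2.2 (b + 1) (by omega) (border_mem' T hb1 hbn')
      simp only at hi'
      by_cases hw0 : w b = 0
      · have h1 := hw b hb1 hbn'
        rw [hw0] at h1
        have hz : nuLetter T b = 0 := fin3_le_zero h1
        rw [nuLetter_eq_zero_iff] at hz
        have hie : i' = b + 1 := by
          by_contra hne
          rcases Nat.lt_or_ge i' (b + 1) with h | h
          · exact hz.2.2 i' h hmem
          · omega
        refine ⟨hcell, b + 1, by omega, Or.inr (U_upArrow_border hb1 hbn' hw0)⟩
      · exact ⟨hcell, 1, by have : 1 ≤ a := hcell.1; omega,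
          Or.inr (U_upArrow_one hb1 hbn' hw0)⟩
  · -- row spaces
    rintro ⟨a, b⟩ ⟨hcell, j', hj', hroot | hleft⟩
    · exact ⟨hcell, j', hj', Or.inl hroot⟩
    · obtain ⟨ha2, han, hcase⟩ := U_leftArrow_char hleft
      have ha2' : 2 ≤ a := ha2
      have han' : a ≤ n := han
      obtain ⟨jT, hjT1, hjTn, hjTl, hjTmax⟩ := exists_leftArrow T ha2 han
      have hjT1' : a - 1 ≤ jT := hjT1
      have hj'' : b ≤ j' := hj'
      refine ⟨hcell, jT, ?_, Or.inr hjTl⟩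
      rcases hcase with ⟨hw2, he⟩ | ⟨hwne, he⟩
      · have h' : j' = a - 1 := he
        omega
      · have h' : j' = ccf w n a := he
        have hja : a ≤ jT := by
          rcases Nat.lt_or_ge jT a with h | h
          · exfalso
            have hjTe : jT = a - 1 := by omega
            have hnl : nuLetter T (a - 1) ≠ 2 := by
              intro hcon
              have h1 := hw (a - 1) (by omega) (by omega)
              rw [hcon] at h1
              exact hwne (fin3_two_le h1)
            rw [Ne, nuLetter_eq_two_iff] at hnl
            have hae : a - 1 + 1 = a := by omega
            rw [hae] at hnl
            rw [hjTe] at hjTl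
            exact hnl hjTl
          · exact h
        have hccf : ccf w n a ≤ jT := by
          by_contra hcon
          push_neg at hcon
          have hwj : w jT = 0 := ccf_min hja hcon
          have hz : nuLetter T jT = 0 := by
            have h1 := hw jT (by omega) (by have := ccf_le w n a; omega)
            rw [hwj] at h1
            exact fin3_le_zero h1
          rw [nuLetter_eq_zero_iff] at hz
          exact hz.2.2 a (by omega) hjTl.1
        omega
  · -- free cells
    rintro ⟨p, q⟩ hfreeT hfreeU hmem
    obtain ⟨hcell, ⟨i', hi', hup⟩, ⟨j', hj', hleft⟩⟩ := hfreeU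
    have hi'' : i' < p := hi'
    have hj'' : q < j' := hj'
    obtain ⟨hq1, hqn, hupcase⟩ := U_upArrow_char hup
    obtain ⟨hp2, hpn, hleftcase⟩ := U_leftArrow_char hleft
    have hq1' : 1 ≤ q := hcell.2.2.1
    have hqp : p - 1 ≤ q := by
      rcases hcell.2.2.2.2 with h | h
      · have h' : p ≤ 2 := h
        have h2' : 2 ≤ p := hp2
        omega
      · exact h
    by_cases hborder : q = p - 1
    · exact (Ufb n w hn).border_mem _ ⟨hp2, hpn, hborder⟩
    · exfalso
      have hp2' : 2 ≤ p := hp2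
      have hqp' : p ≤ q := by omega
      rcases hleftcase with ⟨hw2, he⟩ | ⟨hwne, he⟩
      · have h' : j' = p - 1 := he
        omega
      · have h' : j' = ccf w n p := he
        have hqc : q < ccf w n p := by omega
        have hwq : w q = 0 := ccf_min hqp' hqc
        rcases hupcase with ⟨hw0, he2⟩ | ⟨hwne', he2⟩
        · have h3 : i' = q + 1 := he2
          omega
        · exact hwne' hwq

end Top

/-- the relation `ν_{T₁} = ν_{T₂}` is a lattice congruence on
`esTam n`, and `T ↦ ν_T` induces a lattice isomorphism from the quotient onto the
product lattice `[3]^(n-1)` (it is surjective, its fibers are the congruence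
classes, and it maps meets to pointwise minima and joins to pointwise maxima). -/
theorem border_congruence_and_quotient (n : ℕ) (hn : 1 ≤ n) :
    (∀ x1 x2 y1 y2 m1 m2 : FB n, nuMap x1 = nuMap x2 → nuMap y1 = nuMap y2 →
      IsMeet x1 y1 m1 → IsMeet x2 y2 m2 → nuMap m1 = nuMap m2) ∧
    (∀ x1 x2 y1 y2 j1 j2 : FB n, nuMap x1 = nuMap x2 → nuMap y1 = nuMap y2 →
      IsJoin x1 y1 j1 → IsJoin x2 y2 j2 → nuMap j1 = nuMap j2) ∧
    Function.Surjective (nuMap (n := n)) ∧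
    (∀ x y m : FB n, IsMeet x y m →
      nuMap m = fun k => min (nuMap x k) (nuMap y k)) ∧
    (∀ x y j : FB n, IsJoin x y j →
      nuMap j = fun k => max (nuMap x k) (nuMap y k)) := by
  have hmeet : ∀ x y m : FB n, IsMeet x y m →
      nuMap m = fun k => min (nuMap x k) (nuMap y k) := by
    intro x y m hm
    funext k
    have hk1 : 1 ≤ k.1 + 1 := by omega
    have hk2 : (k.1 + 1) + 1 ≤ n := by have := k.isLt; omega
    set w : ℕ → Fin 3 := fun j => min (nuLetter x j) (nuLetter y j) with hwdef
    have h1 : Lhd (Bfb n w hn) x := B_lhd hn x (fun j hj hj' => min_le_left _ _)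
    have h2 : Lhd (Bfb n w hn) y := B_lhd hn y (fun j hj hj' => min_le_right _ _)
    have h3 : Lhd (Bfb n w hn) m := hm.2.2 _ h1 h2
    have h4 := lhd_nuLetter_mono h3 hk1 hk2
    rw [B_nuLetter hn hk1 hk2] at h4
    have h5 := lhd_nuLetter_mono hm.1 hk1 hk2
    have h6 := lhd_nuLetter_mono hm.2.1 hk1 hk2
    exact le_antisymm (le_min h5 h6) h4
  have hjoin : ∀ x y j : FB n, IsJoin x y j →
      nuMap j = fun k => max (nuMap x k) (nuMap y k) := by
    intro x y j hj
    funext k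
    have hk1 : 1 ≤ k.1 + 1 := by omega
    have hk2 : (k.1 + 1) + 1 ≤ n := by have := k.isLt; omega
    set w : ℕ → Fin 3 := fun i => max (nuLetter x i) (nuLetter y i) with hwdef
    have h1 : Lhd x (Ufb n w hn) := U_lhd hn x (fun i hi hi' => le_max_left _ _)
    have h2 : Lhd y (Ufb n w hn) := U_lhd hn y (fun i hi hi' => le_max_right _ _)
    have h3 : Lhd j (Ufb n w hn) := hj.2.2 _ h1 h2
    have h4 := lhd_nuLetter_mono h3 hk1 hk2
    rw [U_nuLetter hn hk1 hk2] at h4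
    have h5 := lhd_nuLetter_mono hj.1 hk1 hk2
    have h6 := lhd_nuLetter_mono hj.2.1 hk1 hk2
    exact le_antisymm h4 (max_le h5 h6)
  refine ⟨?_, ?_, ?_, hmeet, hjoin⟩
  · intro x1 x2 y1 y2 m1 m2 hx hy h1 h2
    rw [hmeet x1 y1 m1 h1, hmeet x2 y2 m2 h2, hx, hy]
  · intro x1 x2 y1 y2 j1 j2 hx hy h1 h2
    rw [hjoin x1 y1 j1 h1, hjoin x2 y2 j2 h2, hx, hy]
  · intro v
    refine ⟨Bfb n (fun j => if h : 1 ≤ j ∧ j + 1 ≤ n then v ⟨j - 1, by omega⟩ else 0) hn, ?_⟩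
    funext k
    have hk1 : 1 ≤ k.1 + 1 := by omega
    have hk2 : (k.1 + 1) + 1 ≤ n := by have := k.isLt; omega
    show nuLetter _ (k.1 + 1) = v k
    rw [B_nuLetter hn hk1 hk2]
    rw [dif_pos ⟨hk1, hk2⟩]
    exact congrArg v (Fin.ext rfl)

end EsTam
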